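/- Assume pairwise identifiability and define ρ := max over y≠y' of min_{s∈[0,1]} ∏_{m=1}^K M_m^{(y,y')}(s). Then ρ∈(0,1), and the uniform query plan r^unif(n)=(n,…,n) is surrogate-feasible (i.e. P̄_e(y;r^unif(n))≤α_y for all y∈𝒴) whenever n ≥ ⌈ log((L−1)·π_max / (π_min·α_min)) / (−log ρ) ⌉ =: n_unif. In particular OPT̄(α) ≤ n_unif · c_Σ, and every optimal surrogate design r* satisfies ∑_{m=1}^K r*_m ≤ n_unif · c_Σ / c_min (where c_Σ=∑_m c_m, c_min=min_m c_m, π_max=max_y π(y), π_min=min_y π(y)). -/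

import Mathlib

open Finset Set
open scoped Classical BigOperators ENNReal

namespace MultiLLM

noncomputable section

variable {L K : ℕ}

/-- The observation space for a query plan `r`: model `m` is queried `r m` times. -/
abbrev Obs (𝒳 : Fin K → Type) (r : Fin K → ℕ) := ∀ m : Fin K, Fin (r m) → 𝒳 m

variable {𝒳 : Fin K → Type} [∀ m, Fintype (𝒳 m)]

/-- Conditional likelihood of an observation vector given `Y = y`. -/
def prodLik (p : ∀ m : Fin K, 𝒳 m → Fin L → ℝ) (r : Fin K → ℕ) (y : Fin L)
    (x : Obs 𝒳 r) : ℝ :=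
  ∏ m, ∏ t, p m (x m t) y

/-- MAP score of label `y` at observation `x`. -/
def score (π : Fin L → ℝ) (p : ∀ m : Fin K, 𝒳 m → Fin L → ℝ) (r : Fin K → ℕ)
    (y : Fin L) (x : Obs 𝒳 r) : ℝ :=
  π y * prodLik p r y x

/-- Conditional probability of an event `E` given `Y = y`. -/
def condProb (p : ∀ m : Fin K, 𝒳 m → Fin L → ℝ) (r : Fin K → ℕ) (y : Fin L)
    (E : Set (Obs 𝒳 r)) : ℝ :=
  ∑ x : Obs 𝒳 r, E.indicator (prodLik p r y) x

/-- `Yhat` is a MAP estimator for plan `r`. -/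
def IsMAP (π : Fin L → ℝ) (p : ∀ m : Fin K, 𝒳 m → Fin L → ℝ) (r : Fin K → ℕ)
    (Yhat : Obs 𝒳 r → Fin L) : Prop :=
  ∀ x : Obs 𝒳 r, ∀ y : Fin L, score π p r y x ≤ score π p r (Yhat x) x

/-- Statewise error probability of estimator `Yhat` when the truth is `y`. -/
def Pe (p : ∀ m : Fin K, 𝒳 m → Fin L → ℝ) (r : Fin K → ℕ) (y : Fin L)
    (Yhat : Obs 𝒳 r → Fin L) : ℝ :=
  condProb p r y {x | Yhat x ≠ y}

/-- Log-likelihood difference between competing label `y'` and true label `y`. -/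
def LLdiff (π : Fin L → ℝ) (p : ∀ m : Fin K, 𝒳 m → Fin L → ℝ) (r : Fin K → ℕ)
    (y y' : Fin L) (x : Obs 𝒳 r) : ℝ :=
  Real.log (π y' / π y) + ∑ m, ∑ t, Real.log (p m (x m t) y' / p m (x m t) y)

/-- Chernoff affinity factor `M_m^{(y,y')}(s)`. -/
def chernoffM (p : ∀ m : Fin K, 𝒳 m → Fin L → ℝ) (m : Fin K) (y y' : Fin L)
    (s : ℝ) : ℝ :=
  ∑ x : 𝒳 m, p m x y ^ (1 - s) * p m x y' ^ s

/-- Pairwise Chernoff proxy `P̄_{y,y'}(r; s)`. -/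
def proxy (π : Fin L → ℝ) (p : ∀ m : Fin K, 𝒳 m → Fin L → ℝ) (r : Fin K → ℕ)
    (y y' : Fin L) (s : ℝ) : ℝ :=
  (π y' / π y) ^ s * ∏ m, chernoffM p m y y' s ^ r m

/-- Optimized pairwise Chernoff proxy `P̄_{y,y'}(r) = min_{s ∈ [0,1]} P̄_{y,y'}(r; s)`. -/
def proxyOpt (π : Fin L → ℝ) (p : ∀ m : Fin K, 𝒳 m → Fin L → ℝ) (r : Fin K → ℕ)
    (y y' : Fin L) : ℝ :=
  sInf ((fun s => proxy π p r y y' s) '' Set.Icc (0 : ℝ) 1)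

/-- Surrogate statewise error bound `P̄_e(y; r)`. -/
def PeBar (π : Fin L → ℝ) (p : ∀ m : Fin K, 𝒳 m → Fin L → ℝ) (r : Fin K → ℕ)
    (y : Fin L) : ℝ :=
  ∑ y' ∈ Finset.univ.filter (fun y' => y' ≠ y), proxyOpt π p r y y'

/-- Total cost of a query plan. -/
def cost (c : Fin K → ℝ) (r : Fin K → ℕ) : ℝ := ∑ m, c m * (r m : ℝ)

/-- Effective sample size `n_{y,y'}(r)`: total queries to models distinguishing `y,y'`. -/
def effSample (p : ∀ m : Fin K, 𝒳 m → Fin L → ℝ) (r : Fin K → ℕ) (y y' : Fin L) : ℕ :=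
  ∑ m ∈ Finset.univ.filter (fun m => (fun x => p m x y) ≠ (fun x => p m x y')), r m

/-- Tilted per-symbol distribution `q_m^{(y,y')}(x; s)`. -/
def qTilt (p : ∀ m : Fin K, 𝒳 m → Fin L → ℝ) (m : Fin K) (y y' : Fin L) (s : ℝ)
    (x : 𝒳 m) : ℝ :=
  p m x y ^ (1 - s) * p m x y' ^ s / chernoffM p m y y' s

/-- Weight of an observation under the tilted product measure `ℚ_{y,y',r,s}`. -/
def Qweight (p : ∀ m : Fin K, 𝒳 m → Fin L → ℝ) (r : Fin K → ℕ) (y y' : Fin L)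
    (s : ℝ) (x : Obs 𝒳 r) : ℝ :=
  ∏ m, ∏ t, qTilt p m y y' s (x m t)

/-- Expectation under the tilted product measure `ℚ_{y,y',r,s}`. -/
def Qexp (p : ∀ m : Fin K, 𝒳 m → Fin L → ℝ) (r : Fin K → ℕ) (y y' : Fin L)
    (s : ℝ) (f : Obs 𝒳 r → ℝ) : ℝ :=
  ∑ x : Obs 𝒳 r, Qweight p r y y' s x * f x

/-- Probability of an event under the tilted product measure `ℚ_{y,y',r,s}`. -/
def Qprob (p : ∀ m : Fin K, 𝒳 m → Fin L → ℝ) (r : Fin K → ℕ) (y y' : Fin L)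
    (s : ℝ) (E : Set (Obs 𝒳 r)) : ℝ :=
  ∑ x : Obs 𝒳 r, E.indicator (Qweight p r y y' s) x

/-- Variance under the tilted product measure `ℚ_{y,y',r,s}`. -/
def Qvar (p : ∀ m : Fin K, 𝒳 m → Fin L → ℝ) (r : Fin K → ℕ) (y y' : Fin L)
    (s : ℝ) (f : Obs 𝒳 r → ℝ) : ℝ :=
  Qexp p r y y' s (fun x => (f x - Qexp p r y y' s f) ^ 2)

/-- True feasible set `ℛ(α)` (with MAP estimator family `Yhat`). -/
def RtrueSet (p : ∀ m : Fin K, 𝒳 m → Fin L → ℝ)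
    (Yhat : ∀ r : Fin K → ℕ, Obs 𝒳 r → Fin L) (α : Fin L → ℝ) : Set (Fin K → ℕ) :=
  {r | ∀ y, Pe p r y (Yhat r) ≤ α y}

/-- Surrogate feasible set `ℛ̄(α)`. -/
def RbarSet (π : Fin L → ℝ) (p : ∀ m : Fin K, 𝒳 m → Fin L → ℝ)
    (α : Fin L → ℝ) : Set (Fin K → ℕ) :=
  {r | ∀ y, PeBar π p r y ≤ α y}

/-- True optimal cost `OPT(α)` (with `+∞` for the empty feasible set). -/
def OPTtrue (p : ∀ m : Fin K, 𝒳 m → Fin L → ℝ)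
    (Yhat : ∀ r : Fin K → ℕ, Obs 𝒳 r → Fin L) (c : Fin K → ℝ) (α : Fin L → ℝ) : ℝ≥0∞ :=
  ⨅ r ∈ RtrueSet p Yhat α, ENNReal.ofReal (cost c r)

/-- Surrogate optimal cost `OPT̄(α)` (with `+∞` for the empty feasible set). -/
def OPTbar (π : Fin L → ℝ) (p : ∀ m : Fin K, 𝒳 m → Fin L → ℝ)
    (c : Fin K → ℝ) (α : Fin L → ℝ) : ℝ≥0∞ :=
  ⨅ r ∈ RbarSet π p α, ENNReal.ofReal (cost c r)



private lemma cont_rpow {a : ℝ} (ha : 0 < a) : Continuous (fun s : ℝ => a ^ s) := by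
  have h : (fun s : ℝ => a ^ s) = fun s => Real.exp (Real.log a * s) := by
    funext s; rw [Real.rpow_def_of_pos ha]
  rw [h]; exact Real.continuous_exp.comp (continuous_const.mul continuous_id)

private lemma term_half_le {a b : ℝ} (ha : 0 < a) (hb : 0 < b) :
    a ^ (1 - (1/2:ℝ)) * b ^ ((1/2):ℝ) ≤ (a + b)/2 := by
  have h1 : (1 - (1/2:ℝ)) = 1/2 := by norm_num
  rw [h1, ← Real.sqrt_eq_rpow, ← Real.sqrt_eq_rpow]
  nlinarith [Real.sq_sqrt ha.le, Real.sq_sqrt hb.le,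
    sq_nonneg (Real.sqrt a - Real.sqrt b), Real.sqrt_nonneg a, Real.sqrt_nonneg b]

private lemma term_half_lt {a b : ℝ} (ha : 0 < a) (hb : 0 < b) (hab : a ≠ b) :
    a ^ (1 - (1/2:ℝ)) * b ^ ((1/2):ℝ) < (a + b)/2 := by
  have h1 : (1 - (1/2:ℝ)) = 1/2 := by norm_num
  rw [h1, ← Real.sqrt_eq_rpow, ← Real.sqrt_eq_rpow]
  have hs : Real.sqrt a ≠ Real.sqrt b := by
    intro h
    exact hab (by rw [← Real.sq_sqrt ha.le, h, Real.sq_sqrt hb.le])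
  have h2 : 0 < (Real.sqrt a - Real.sqrt b)^2 := sq_pos_of_ne_zero (sub_ne_zero.2 hs)
  nlinarith [Real.sq_sqrt ha.le, Real.sq_sqrt hb.le]

private lemma continuous_chernoffM {L K : ℕ} {𝒳 : Fin K → Type} [∀ m, Fintype (𝒳 m)]
    (p : ∀ m : Fin K, 𝒳 m → Fin L → ℝ) (m : Fin K) (y y' : Fin L)
    (hp : ∀ (x : 𝒳 m) (z : Fin L), 0 < p m x z) :
    Continuous (fun s => chernoffM p m y y' s) := by
  unfold chernoffM
  apply continuous_finset_sum
  intro x _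
  exact ((cont_rpow (hp x y)).comp (continuous_const.sub continuous_id)).mul
    (cont_rpow (hp x y'))

private lemma chernoffM_pos {L K : ℕ} {𝒳 : Fin K → Type} [∀ m, Fintype (𝒳 m)]
    (p : ∀ m : Fin K, 𝒳 m → Fin L → ℝ) (m : Fin K) (y y' : Fin L) (s : ℝ)
    (hX : Nonempty (𝒳 m))
    (hp : ∀ (x : 𝒳 m) (z : Fin L), 0 < p m x z) :
    0 < chernoffM p m y y' s :=
  Finset.sum_pos (fun x _ => mul_pos (Real.rpow_pos_of_pos (hp x y) _)
    (Real.rpow_pos_of_pos (hp x y') _)) Finset.univ_nonempty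

private lemma chernoffM_half_le_one {L K : ℕ} {𝒳 : Fin K → Type} [∀ m, Fintype (𝒳 m)]
    (p : ∀ m : Fin K, 𝒳 m → Fin L → ℝ) (m : Fin K) (y y' : Fin L)
    (hp : ∀ (x : 𝒳 m) (z : Fin L), 0 < p m x z)
    (h1 : ∑ x : 𝒳 m, p m x y = 1) (h1' : ∑ x : 𝒳 m, p m x y' = 1) :
    chernoffM p m y y' (1/2) ≤ 1 := by
  unfold chernoffM
  calc ∑ x : 𝒳 m, p m x y ^ (1 - (1/2:ℝ)) * p m x y' ^ ((1/2):ℝ)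
      ≤ ∑ x : 𝒳 m, (p m x y + p m x y')/2 :=
        Finset.sum_le_sum (fun x _ => term_half_le (hp x y) (hp x y'))
    _ = 1 := by rw [← Finset.sum_div, Finset.sum_add_distrib, h1, h1']; norm_num

private lemma chernoffM_half_lt_one {L K : ℕ} {𝒳 : Fin K → Type} [∀ m, Fintype (𝒳 m)]
    (p : ∀ m : Fin K, 𝒳 m → Fin L → ℝ) (m : Fin K) (y y' : Fin L)
    (hp : ∀ (x : 𝒳 m) (z : Fin L), 0 < p m x z)
    (h1 : ∑ x : 𝒳 m, p m x y = 1) (h1' : ∑ x : 𝒳 m, p m x y' = 1)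
    (hne : (fun x => p m x y) ≠ (fun x => p m x y')) :
    chernoffM p m y y' (1/2) < 1 := by
  obtain ⟨x₀, hx₀⟩ : ∃ x, p m x y ≠ p m x y' := by
    by_contra h
    push_neg at h
    exact hne (funext h)
  unfold chernoffM
  calc ∑ x : 𝒳 m, p m x y ^ (1 - (1/2:ℝ)) * p m x y' ^ ((1/2):ℝ)
      < ∑ x : 𝒳 m, (p m x y + p m x y')/2 := by
        apply Finset.sum_lt_sum
          (fun x _ => term_half_le (hp x y) (hp x y'))
        exact ⟨x₀, Finset.mem_univ _, term_half_lt (hp x₀ y) (hp x₀ y') hx₀⟩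
    _ = 1 := by rw [← Finset.sum_div, Finset.sum_add_distrib, h1, h1']; norm_num


/-- Crude feasible design and query-count bound.
With `ρ = max_{y≠y'} min_{s∈[0,1]} ∏_m M_m^{(y,y')}(s)` one has `ρ ∈ (0,1)`;
the uniform plan `(n,…,n)` is surrogate-feasible for every `n ≥ n_unif`, so
`OPT̄(α) ≤ n_unif · c_Σ`, and every optimal surrogate design `r*` satisfies
`∑_m r*_m ≤ n_unif · c_Σ / c_min`. -/
theorem crude_feasible_design
    (hL : 2 ≤ L)
    (π : Fin L → ℝ) (p : ∀ m : Fin K, 𝒳 m → Fin L → ℝ)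
    (hπ : ∀ y, 0 < π y) (hπ1 : ∑ y, π y = 1)
    (hp : ∀ (m : Fin K) (x : 𝒳 m) (y : Fin L), 0 < p m x y)
    (hp1 : ∀ (m : Fin K) (y : Fin L), ∑ x : 𝒳 m, p m x y = 1)
    (hident : ∀ y y' : Fin L, y ≠ y' → ∃ m, (fun x => p m x y) ≠ (fun x => p m x y'))
    (c : Fin K → ℝ) (hc : ∀ m, 0 < c m)
    (cmin : ℝ) (hcmin : IsLeast (Set.range c) cmin)
    (πmax : ℝ) (hπmax : IsGreatest (Set.range π) πmax)
    (πmin : ℝ) (hπmin : IsLeast (Set.range π) πmin)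
    (α : Fin L → ℝ) (hα : ∀ y, α y ∈ Set.Ioo (0 : ℝ) 1)
    (amin : ℝ) (hamin : IsLeast (Set.range α) amin)
    (ρ : ℝ)
    (hρ : ρ = sSup {v : ℝ | ∃ y y' : Fin L, y ≠ y' ∧
      v = sInf ((fun s => ∏ m, chernoffM p m y y' s) '' Set.Icc (0 : ℝ) 1)})
    (nunif : ℕ)
    (hnunif : nunif =
      ⌈Real.log (((L : ℝ) - 1) * πmax / (πmin * amin)) / (-Real.log ρ)⌉₊) :
    0 < ρ ∧ ρ < 1 ∧
    (∀ n : ℕ, nunif ≤ n → (fun _ => n) ∈ RbarSet π p α) ∧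
    OPTbar π p c α ≤ ENNReal.ofReal ((nunif : ℝ) * ∑ m, c m) ∧
    ∀ rstar ∈ RbarSet π p α,
      (∀ r' ∈ RbarSet π p α, cost c rstar ≤ cost c r') →
      (∑ m, (rstar m : ℝ)) ≤ (nunif : ℝ) * (∑ m, c m) / cmin := by
  classical
  -- basic positivity facts
  obtain ⟨ymx, hymx⟩ := hπmax.1
  obtain ⟨ymn, hymn⟩ := hπmin.1
  obtain ⟨ya, hya⟩ := hamin.1
  obtain ⟨mc, hmc⟩ := hcmin.1
  have hπmax_pos : 0 < πmax := hymx ▸ hπ ymx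
  have hπmin_pos : 0 < πmin := hymn ▸ hπ ymn
  have hamin_pos : 0 < amin := hya ▸ (hα ya).1
  have hcmin_pos : 0 < cmin := hmc ▸ hc mc
  have hπminmax : πmin ≤ πmax := hπmin.2 hπmax.1
  have hy0 : (0 : ℕ) < L := by omega
  have y0 : Fin L := ⟨0, hy0⟩
  have hXne : ∀ m : Fin K, Nonempty (𝒳 m) := by
    intro m
    rcases isEmpty_or_nonempty (𝒳 m) with h | h
    · have := hp1 m y0
      rw [Finset.univ_eq_empty, Finset.sum_empty] at this
      norm_num at this
    · exact h
  -- the per-pair function and its optimized value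
  set G : Fin L → Fin L → ℝ → ℝ := fun y y' s => ∏ m, chernoffM p m y y' s with hG
  have hGpos : ∀ y y' s, 0 < G y y' s :=
    fun y y' s => Finset.prod_pos (fun m _ => chernoffM_pos p m y y' s (hXne m) (fun x z => hp m x z))
  have hGcont : ∀ y y', Continuous (G y y') := by
    intro y y'
    apply continuous_finset_prod
    intro m _
    exact continuous_chernoffM p m y y' (fun x z => hp m x z)
  set V : Fin L → Fin L → ℝ := fun y y' => sInf ((fun s => ∏ m, chernoffM p m y y' s) '' Set.Icc (0:ℝ) 1) with hV
  have hVmem : ∀ y y', ∃ s ∈ Set.Icc (0:ℝ) 1, G y y' s = V y y' := by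
    intro y y'
    have hcomp : IsCompact ((fun s => ∏ m, chernoffM p m y y' s) '' Set.Icc (0:ℝ) 1) :=
      isCompact_Icc.image (hGcont y y')
    have hne : ((fun s => ∏ m, chernoffM p m y y' s) '' Set.Icc (0:ℝ) 1).Nonempty :=
      (Set.nonempty_Icc.2 (by norm_num)).image _
    obtain ⟨s, hs, hval⟩ := hcomp.sInf_mem hne
    exact ⟨s, hs, hval⟩
  have hVpos : ∀ y y', 0 < V y y' := by
    intro y y'
    obtain ⟨s, _, hval⟩ := hVmem y y'
    exact hval ▸ hGpos y y' s
  have hVle_half : ∀ y y', V y y' ≤ G y y' (1/2) := by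
    intro y y'
    apply csInf_le
    · refine ⟨0, ?_⟩
      rintro v ⟨s, _, rfl⟩
      exact (hGpos y y' s).le
    · exact ⟨1/2, ⟨by norm_num, by norm_num⟩, rfl⟩
  have hVlt1 : ∀ y y', y ≠ y' → V y y' < 1 := by
    intro y y' hyy'
    refine (hVle_half y y').trans_lt ?_
    obtain ⟨m₀, hm₀⟩ := hident y y' hyy'
    have hlt : chernoffM p m₀ y y' (1/2) < 1 :=
      chernoffM_half_lt_one p m₀ y y' (fun x z => hp m₀ x z) (hp1 m₀ y) (hp1 m₀ y') hm₀
    have hle : ∀ m, chernoffM p m y y' (1/2) ≤ 1 :=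
      fun m => chernoffM_half_le_one p m y y' (fun x z => hp m x z) (hp1 m y) (hp1 m y')
    have hpos : ∀ m, 0 < chernoffM p m y y' (1/2) :=
      fun m => chernoffM_pos p m y y' _ (hXne m) (fun x z => hp m x z)
    calc G y y' (1/2) = chernoffM p m₀ y y' (1/2) * ∏ m ∈ Finset.univ.erase m₀, chernoffM p m y y' (1/2) :=
          (Finset.mul_prod_erase Finset.univ _ (Finset.mem_univ m₀)).symm
      _ ≤ chernoffM p m₀ y y' (1/2) * 1 := by
          apply mul_le_mul_of_nonneg_left _ (hpos m₀).le
          exact Finset.prod_le_one (fun m _ => (hpos m).le) (fun m _ => hle m)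
      _ = chernoffM p m₀ y y' (1/2) := mul_one _
      _ < 1 := hlt
  -- the set whose sup defines ρ
  set Sset : Set ℝ := {v : ℝ | ∃ y y' : Fin L, y ≠ y' ∧
      v = sInf ((fun s => ∏ m, chernoffM p m y y' s) '' Set.Icc (0 : ℝ) 1)} with hSset
  have hSsub : Sset ⊆ Set.range (fun q : Fin L × Fin L => V q.1 q.2) := by
    rintro v ⟨y, y', _, rfl⟩
    exact ⟨(y, y'), rfl⟩
  have hSfin : Sset.Finite := (Set.finite_range _).subset hSsub
  have hSne : Sset.Nonempty := by
    have h01 : ((⟨0, by omega⟩ : Fin L)) ≠ (⟨1, by omega⟩ : Fin L) := by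
      simp [Fin.ext_iff]
    exact ⟨V ⟨0, by omega⟩ ⟨1, by omega⟩, ⟨0, by omega⟩, ⟨1, by omega⟩, h01, rfl⟩
  have hρ_mem : ρ ∈ Sset := by
    rw [hρ]
    exact hSne.csSup_mem hSfin
  have hle_ρ : ∀ y y', y ≠ y' → V y y' ≤ ρ := by
    intro y y' h
    rw [hρ]
    exact le_csSup hSfin.bddAbove ⟨y, y', h, rfl⟩
  obtain ⟨yρ, yρ', hyρ, hρval⟩ := hρ_mem
  have hρ0 : 0 < ρ := hρval ▸ hVpos yρ yρ'
  have hρ1 : ρ < 1 := hρval ▸ hVlt1 yρ yρ' hyρ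
  -- the key per-pair bound
  have key : ∀ (n : ℕ) (y y' : Fin L), y ≠ y' →
      proxyOpt π p (fun _ => n) y y' ≤ (πmax/πmin) * ρ ^ n := by
    intro n y y' hyy'
    obtain ⟨s, hsIcc, hGs⟩ := hVmem y y'
    have hbdd : BddBelow ((fun s => proxy π p (fun _ => n) y y' s) '' Set.Icc (0:ℝ) 1) := by
      refine ⟨0, ?_⟩
      rintro v ⟨t, _, rfl⟩
      unfold proxy
      apply mul_nonneg (Real.rpow_pos_of_pos (div_pos (hπ y') (hπ y)) t).le
      exact Finset.prod_nonneg (fun m _ =>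
        pow_nonneg (chernoffM_pos p m y y' t (hXne m) (fun x z => hp m x z)).le _)
    have hb : proxyOpt π p (fun _ => n) y y' ≤ proxy π p (fun _ => n) y y' s :=
      csInf_le hbdd ⟨s, hsIcc, rfl⟩
    refine hb.trans ?_
    unfold proxy
    rw [Finset.prod_pow]
    have hbase_pos : 0 < π y' / π y := div_pos (hπ y') (hπ y)
    have h1 : (π y' / π y) ^ s ≤ πmax / πmin := by
      rcases le_total (π y' / π y) 1 with hb1 | hb1
      · refine (Real.rpow_le_one hbase_pos.le hb1 hsIcc.1).trans ?_
        exact (one_le_div hπmin_pos).2 hπminmax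
      · calc (π y' / π y) ^ s ≤ (π y' / π y) ^ (1:ℝ) :=
              Real.rpow_le_rpow_of_exponent_le hb1 hsIcc.2
          _ = π y' / π y := Real.rpow_one _
          _ ≤ πmax / πmin := div_le_div₀ hπmax_pos.le (hπmax.2 ⟨y', rfl⟩) hπmin_pos (hπmin.2 ⟨y, rfl⟩)
    have h2 : (∏ m, chernoffM p m y y' s) ^ n ≤ ρ ^ n := by
      apply pow_le_pow_left₀ (hGpos y y' s).le
      calc (∏ m, chernoffM p m y y' s) = V y y' := hGs
        _ ≤ ρ := hle_ρ y y' hyy'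
    exact mul_le_mul h1 h2 (pow_nonneg (hGpos y y' s).le n) (by positivity)
  -- feasibility of the uniform plan
  have hL1 : (1:ℕ) ≤ L := by omega
  have feas : ∀ n : ℕ, nunif ≤ n → (fun _ : Fin K => n) ∈ RbarSet π p α := by
    intro n hn y
    have hcardy : (Finset.univ.filter (fun y' => y' ≠ y)).card = L - 1 := by
      rw [Finset.filter_ne', Finset.card_erase_of_mem (Finset.mem_univ y),
        Finset.card_univ, Fintype.card_fin]
    have hcastL : ((L - 1 : ℕ) : ℝ) = (L:ℝ) - 1 := by
      rw [Nat.cast_sub hL1]; norm_num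
    have hstep1 : PeBar π p (fun _ => n) y ≤ ((L:ℝ) - 1) * ((πmax/πmin) * ρ ^ n) := by
      unfold PeBar
      calc ∑ y' ∈ Finset.univ.filter (fun y' => y' ≠ y), proxyOpt π p (fun _ => n) y y'
          ≤ ∑ y' ∈ Finset.univ.filter (fun y' => y' ≠ y), (πmax/πmin) * ρ ^ n := by
            apply Finset.sum_le_sum
            intro y' hy'
            exact key n y y' (Ne.symm (Finset.mem_filter.1 hy').2)
        _ = ((Finset.univ.filter (fun y' => y' ≠ y)).card : ℝ) * ((πmax/πmin) * ρ ^ n) := by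
            rw [Finset.sum_const, nsmul_eq_mul]
        _ = ((L:ℝ) - 1) * ((πmax/πmin) * ρ ^ n) := by rw [hcardy, hcastL]
    set B : ℝ := ((L:ℝ) - 1) * πmax / (πmin * amin) with hB
    have hL1R : (1:ℝ) ≤ (L:ℝ) - 1 := by
      have : (2:ℝ) ≤ (L:ℝ) := by exact_mod_cast hL
      linarith
    have hBpos : 0 < B := by
      apply div_pos (mul_pos (by linarith) hπmax_pos) (mul_pos hπmin_pos hamin_pos)
    have hlogρ : Real.log ρ < 0 := Real.log_neg hρ0 hρ1
    have hdivle : Real.log B / (-Real.log ρ) ≤ (n:ℝ) := by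
      calc Real.log B / (-Real.log ρ) ≤ (nunif : ℝ) := by
            rw [hnunif]; exact Nat.le_ceil _
        _ ≤ (n:ℝ) := by exact_mod_cast hn
    have hlogB : Real.log B ≤ (n:ℝ) * (-Real.log ρ) := by
      rw [← div_le_iff₀ (by linarith : (0:ℝ) < -Real.log ρ)] at *
      exact hdivle
    have hρn : ρ ^ n ≤ B⁻¹ := by
      rw [← Real.log_le_log_iff (pow_pos hρ0 n) (inv_pos.2 hBpos), Real.log_pow, Real.log_inv]
      push_cast
      nlinarith
    have hfinal : ((L:ℝ) - 1) * ((πmax/πmin) * ρ ^ n) ≤ amin := by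
      have heq : ((L:ℝ) - 1) * ((πmax/πmin) * B⁻¹) = amin := by
        rw [hB]
        field_simp
      calc ((L:ℝ) - 1) * ((πmax/πmin) * ρ ^ n)
          ≤ ((L:ℝ) - 1) * ((πmax/πmin) * B⁻¹) := by
            apply mul_le_mul_of_nonneg_left _ (by linarith)
            apply mul_le_mul_of_nonneg_left hρn (by positivity)
        _ = amin := heq
    exact hstep1.trans (hfinal.trans (hamin.2 ⟨y, rfl⟩))
  have hmemu : (fun _ : Fin K => nunif) ∈ RbarSet π p α := feas nunif le_rfl
  have hcost : cost c (fun _ : Fin K => nunif) = (nunif:ℝ) * ∑ m, c m := by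
    unfold cost
    rw [Finset.mul_sum]
    exact Finset.sum_congr rfl (fun m _ => mul_comm _ _)
  refine ⟨hρ0, hρ1, feas, ?_, ?_⟩
  · have hle : OPTbar π p c α ≤ ENNReal.ofReal (cost c (fun _ : Fin K => nunif)) := by
      unfold OPTbar
      exact iInf₂_le _ hmemu
    rw [hcost] at hle
    exact hle
  · intro rstar hrstar hopt
    have h1 : cost c rstar ≤ (nunif:ℝ) * ∑ m, c m := hcost ▸ hopt _ hmemu
    have h2 : cmin * ∑ m, (rstar m : ℝ) ≤ cost c rstar := by
      unfold cost
      rw [Finset.mul_sum]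
      exact Finset.sum_le_sum (fun m _ =>
        mul_le_mul_of_nonneg_right (hcmin.2 ⟨m, rfl⟩) (Nat.cast_nonneg _))
    rw [le_div_iff₀ hcmin_pos]
    calc (∑ m, (rstar m : ℝ)) * cmin = cmin * ∑ m, (rstar m : ℝ) := mul_comm _ _
      _ ≤ cost c rstar := h2
      _ ≤ (nunif:ℝ) * ∑ m, c m := h1


end

end MultiLLM
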